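/- For all n, m, α, β, γ ∈ ℕ, the iterated formal partial derivative of the modified box spline symbol B̃#_{α,β,γ}(z₁,z₂) = ((1+z₁)/2)^α ((1+z₂)/2)^β ((z₁+z₂)/2)^γ satisfies, as an identity in ℝ[z₁,z₂]: D^{(n,m)} B̃#_{α,β,γ}(z₁,z₂) = Σ_{ℓ=0}^{γ} C(γ,ℓ) · [ Σ_{i=0}^{n} (n!/2^n) C(α, n−i) ((1+z₁)/2)^{α−(n−i)} C(ℓ, i) (z₁/2)^{ℓ−i} ] · [ Σ_{j=0}^{m} (m!/2^m) C(β, m−j) ((1+z₂)/2)^{β−(m−j)} C(γ−ℓ, j) (z₂/2)^{γ−ℓ−j} ], where each summand is understood to be zero whenever one of its binomial coefficients vanishes (so all exponents occurring in nonzero summands are nonnegative). -/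

import Mathlib

open MvPolynomial

/-- The modified box spline symbol
`B̃#_{α,β,γ}(z₁,z₂) = ((1+z₁)/2)^α ((1+z₂)/2)^β ((z₁+z₂)/2)^γ`. -/
noncomputable def Bst (α β γ : ℕ) : MvPolynomial (Fin 2) ℝ :=
  (C (1 / 2 : ℝ) * (1 + X 0)) ^ α * (C (1 / 2 : ℝ) * (1 + X 1)) ^ β *
    (C (1 / 2 : ℝ) * (X 0 + X 1)) ^ γ

/-- The formal partial derivative `D^{(n,m)} = ∂^{n+m}/∂z₁^n ∂z₂^m`. -/
noncomputable def Dnm (n m : ℕ) : Module.End ℝ (MvPolynomial (Fin 2) ℝ) :=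
  ((pderiv (0 : Fin 2)).toLinearMap ^ n) * ((pderiv (1 : Fin 2)).toLinearMap ^ m)

open Finset

private lemma pd_iter_mul (s : Fin 2) (n : ℕ) (p q : MvPolynomial (Fin 2) ℝ) :
    (pderiv s)^[n] (p * q) =
      ∑ k ∈ range (n + 1),
        n.choose k • ((pderiv s)^[n - k] p * (pderiv s)^[k] q) := by
  induction n with
  | zero => simp [Finset.range]
  | succ n IH =>
    calc
      (pderiv s)^[n + 1] (p * q) =
          pderiv s (∑ k ∈ range n.succ,
              n.choose k • ((pderiv s)^[n - k] p * (pderiv s)^[k] q)) := by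
        rw [Function.iterate_succ_apply', IH]
      _ = (∑ k ∈ range n.succ,
            n.choose k • ((pderiv s)^[n - k + 1] p * (pderiv s)^[k] q)) +
          ∑ k ∈ range n.succ,
            n.choose k • ((pderiv s)^[n - k] p * (pderiv s)^[k + 1] q) := by
        rw [map_sum]
        simp_rw [map_nsmul, pderiv_mul, Function.iterate_succ_apply',
          smul_add, sum_add_distrib]
      _ = (∑ k ∈ range n.succ,
                n.choose k.succ • ((pderiv s)^[n - k] p * (pderiv s)^[k + 1] q)) +
              1 • ((pderiv s)^[n + 1] p * (pderiv s)^[0] q) +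
            ∑ k ∈ range n.succ, n.choose k • ((pderiv s)^[n - k] p * (pderiv s)^[k + 1] q) :=
        ?_
      _ = ((∑ k ∈ range n.succ, n.choose k • ((pderiv s)^[n - k] p * (pderiv s)^[k + 1] q)) +
              ∑ k ∈ range n.succ,
                n.choose k.succ • ((pderiv s)^[n - k] p * (pderiv s)^[k + 1] q)) +
            1 • ((pderiv s)^[n + 1] p * (pderiv s)^[0] q) := by
        rw [add_comm, add_assoc]
      _ = (∑ i ∈ range n.succ,
              (n + 1).choose (i + 1) •
                ((pderiv s)^[n + 1 - (i + 1)] p * (pderiv s)^[i + 1] q)) +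
            1 • ((pderiv s)^[n + 1] p * (pderiv s)^[0] q) := by
        simp_rw [Nat.choose_succ_succ, Nat.succ_sub_succ, add_smul, sum_add_distrib]
      _ = ∑ k ∈ range n.succ.succ,
            n.succ.choose k • ((pderiv s)^[n.succ - k] p * (pderiv s)^[k] q) := by
        rw [sum_range_succ' _ n.succ, Nat.choose_zero_right, tsub_zero]
    congr
    refine (sum_range_succ' _ _).trans (congr_arg₂ (· + ·) ?_ ?_)
    · rw [sum_range_succ, Nat.choose_succ_self, zero_smul, add_zero]
      refine sum_congr rfl fun k hk => ?_
      rw [mem_range] at hk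
      congr
      omega
    · rw [Nat.choose_zero_right, tsub_zero]

private lemma pd_iter_pow (s : Fin 2) (p : MvPolynomial (Fin 2) ℝ)
    (hp : pderiv s p = C (1 / 2 : ℝ)) (a k : ℕ) :
    (pderiv s)^[k] (p ^ a) =
      C ((a.choose k : ℝ) * k.factorial / 2 ^ k) * p ^ (a - k) := by
  induction k with
  | zero => simp
  | succ k ih =>
    have keyN : (a - k) * a.choose k = (k + 1) * a.choose (k + 1) := by
      rw [mul_comm, ← Nat.choose_succ_right_eq]; ring
    have key : ((a - k : ℕ) : ℝ) * (a.choose k : ℝ) =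
        ((k : ℝ) + 1) * (a.choose (k + 1) : ℝ) := by exact_mod_cast keyN
    rw [Function.iterate_succ_apply', ih, Derivation.leibniz, Derivation.leibniz_pow, hp]
    rw [show pderiv s (C ((a.choose k : ℝ) * k.factorial / 2 ^ k)) = 0 from pderiv_C]
    have hsub : a - k - 1 = a - (k + 1) := by omega
    rw [hsub]
    simp only [smul_eq_mul, smul_zero, nsmul_eq_mul, mul_zero, add_zero, ← C_eq_coe_nat]
    have hre : C ((a.choose k : ℝ) * k.factorial / 2 ^ k) *
        (C ((a - k : ℕ) : ℝ) * (p ^ (a - (k + 1)) * C (1 / 2 : ℝ))) =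
        C ((a.choose k : ℝ) * k.factorial / 2 ^ k * ((a - k : ℕ) : ℝ) * (1 / 2)) *
          p ^ (a - (k + 1)) := by
      rw [C_mul, C_mul]; ring
    rw [hre]
    have hco : (a.choose k : ℝ) * k.factorial / 2 ^ k * ((a - k : ℕ) : ℝ) * (1 / 2) =
        (a.choose (k + 1) : ℝ) * (k + 1).factorial / 2 ^ (k + 1) := by
      have hfac : ((k + 1).factorial : ℝ) = ((k : ℝ) + 1) * k.factorial := by
        push_cast [Nat.factorial_succ]; ring
      rw [hfac]
      linear_combination ((k.factorial : ℝ) / 2 ^ (k + 1)) * key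
    rw [hco]

private lemma pd_iter_one_var (s : Fin 2) (p q : MvPolynomial (Fin 2) ℝ)
    (hp : pderiv s p = C (1 / 2 : ℝ)) (hq : pderiv s q = C (1 / 2 : ℝ)) (a b n : ℕ) :
    (pderiv s)^[n] (p ^ a * q ^ b) =
      ∑ i ∈ range (n + 1),
        C ((n.factorial : ℝ) / 2 ^ n * (a.choose (n - i) : ℝ) * (b.choose i : ℝ)) *
          p ^ (a - (n - i)) * q ^ (b - i) := by
  rw [pd_iter_mul]
  refine sum_congr rfl fun i hi => ?_
  rw [mem_range] at hi
  rw [pd_iter_pow s p hp, pd_iter_pow s q hq]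
  have h1 : n.choose i * i.factorial * (n - i).factorial = n.factorial :=
    Nat.choose_mul_factorial_mul_factorial (by omega)
  have h2 : (2 : ℝ) ^ (n - i) * 2 ^ i = 2 ^ n := by
    rw [← pow_add]; congr 1; omega
  have h1' : (n.choose i : ℝ) * (i.factorial : ℝ) * ((n - i).factorial : ℝ)
      = (n.factorial : ℝ) := by exact_mod_cast congrArg Nat.cast h1
  rw [nsmul_eq_mul, ← C_eq_coe_nat]
  have hre : C ((n.choose i : ℕ) : ℝ) *
      (C ((a.choose (n - i) : ℝ) * (n - i).factorial / 2 ^ (n - i)) * p ^ (a - (n - i)) *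
        (C ((b.choose i : ℝ) * i.factorial / 2 ^ i) * q ^ (b - i))) =
      C (((n.choose i : ℕ) : ℝ) * ((a.choose (n - i) : ℝ) * (n - i).factorial / 2 ^ (n - i)) *
          ((b.choose i : ℝ) * i.factorial / 2 ^ i)) *
        p ^ (a - (n - i)) * q ^ (b - i) := by
    rw [C_mul, C_mul]; ring
  rw [hre]
  have hco : ((n.choose i : ℕ) : ℝ) *
      ((a.choose (n - i) : ℝ) * (n - i).factorial / 2 ^ (n - i)) *
      ((b.choose i : ℝ) * i.factorial / 2 ^ i) =
      (n.factorial : ℝ) / 2 ^ n * (a.choose (n - i) : ℝ) * (b.choose i : ℝ) := by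
    rw [← h1', ← h2]
    field_simp
  rw [hco]

private lemma pd_iter_mul_left (s : Fin 2) (n : ℕ) (p q : MvPolynomial (Fin 2) ℝ)
    (hq : pderiv s q = 0) :
    (pderiv s)^[n] (q * p) = q * (pderiv s)^[n] p := by
  induction n with
  | zero => rfl
  | succ n ih =>
    rw [Function.iterate_succ_apply', ih, pderiv_mul, hq, zero_mul, zero_add,
      Function.iterate_succ_apply']

/-- The Leibniz-type formula for `D^{(n,m)} B̃#_{α,β,γ}`.  Summands whose binomial
coefficients vanish are zero (the vanishing binomial coefficient is a factor), so the
truncated natural subtraction in the exponents is harmless. -/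
theorem stmt_17 (n m α β γ : ℕ) :
    Dnm n m (Bst α β γ) =
      ∑ ℓ ∈ Finset.range (γ + 1),
        C ((γ.choose ℓ : ℝ)) *
        (∑ i ∈ Finset.range (n + 1),
          C ((n.factorial : ℝ) / 2 ^ n * (α.choose (n - i) : ℝ) * (ℓ.choose i : ℝ)) *
            (C (1 / 2 : ℝ) * (1 + X 0)) ^ (α - (n - i)) *
            (C (1 / 2 : ℝ) * X 0) ^ (ℓ - i)) *
        (∑ j ∈ Finset.range (m + 1),
          C ((m.factorial : ℝ) / 2 ^ m * (β.choose (m - j) : ℝ) *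
              ((γ - ℓ).choose j : ℝ)) *
            (C (1 / 2 : ℝ) * (1 + X 1)) ^ (β - (m - j)) *
            (C (1 / 2 : ℝ) * X 1) ^ (γ - ℓ - j)) := by
  have h10 : (1 : Fin 2) ≠ 0 := by decide
  have h01 : (0 : Fin 2) ≠ 1 := by decide
  have hP0 : pderiv (0 : Fin 2) (C (1 / 2 : ℝ) * (1 + X 0)) = C (1 / 2 : ℝ) := by
    simp [pderiv_C_mul, pderiv_one, pderiv_X_self]
  have hQ0 : pderiv (0 : Fin 2) (C (1 / 2 : ℝ) * X 0) = C (1 / 2 : ℝ) := by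
    simp [pderiv_C_mul, pderiv_X_self]
  have hP1 : pderiv (1 : Fin 2) (C (1 / 2 : ℝ) * (1 + X 1)) = C (1 / 2 : ℝ) := by
    simp [pderiv_C_mul, pderiv_one, pderiv_X_self]
  have hQ1 : pderiv (1 : Fin 2) (C (1 / 2 : ℝ) * X 1) = C (1 / 2 : ℝ) := by
    simp [pderiv_C_mul, pderiv_X_self]
  have hP0z : pderiv (1 : Fin 2) (C (1 / 2 : ℝ) * (1 + X 0)) = 0 := by
    simp [pderiv_C_mul, pderiv_one, pderiv_X_of_ne h01]
  have hQ0z : pderiv (1 : Fin 2) (C (1 / 2 : ℝ) * X 0) = 0 := by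
    simp [pderiv_C_mul, pderiv_X_of_ne h01]
  have hP1z : pderiv (0 : Fin 2) (C (1 / 2 : ℝ) * (1 + X 1)) = 0 := by
    simp [pderiv_C_mul, pderiv_one, pderiv_X_of_ne h10]
  have hQ1z : pderiv (0 : Fin 2) (C (1 / 2 : ℝ) * X 1) = 0 := by
    simp [pderiv_C_mul, pderiv_X_of_ne h10]
  have hexp : Bst α β γ = ∑ ℓ ∈ range (γ + 1),
      (C ((γ.choose ℓ : ℝ)) *
        ((C (1 / 2 : ℝ) * (1 + X 0)) ^ α * (C (1 / 2 : ℝ) * X 0) ^ ℓ)) *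
      ((C (1 / 2 : ℝ) * (1 + X 1)) ^ β * (C (1 / 2 : ℝ) * X 1) ^ (γ - ℓ)) := by
    unfold Bst
    rw [show (C (1 / 2 : ℝ) * (X 0 + X 1) : MvPolynomial (Fin 2) ℝ)
        = C (1 / 2 : ℝ) * X 0 + C (1 / 2 : ℝ) * X 1 by ring, add_pow, Finset.mul_sum]
    refine sum_congr rfl fun ℓ hℓ => ?_
    rw [← C_eq_coe_nat]
    ring
  have hD : ∀ x : MvPolynomial (Fin 2) ℝ, Dnm n m x =
      (pderiv (0 : Fin 2))^[n] ((pderiv (1 : Fin 2))^[m] x) := fun x => by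
    simp [Dnm, Module.End.mul_apply, Module.End.pow_apply]
  rw [hexp, map_sum]
  refine sum_congr rfl fun ℓ hℓ => ?_
  have hq1 : pderiv (1 : Fin 2) (C ((γ.choose ℓ : ℝ)) *
      ((C (1 / 2 : ℝ) * (1 + X 0)) ^ α * (C (1 / 2 : ℝ) * X 0) ^ ℓ)) = 0 := by
    simp [pderiv_C_mul, pderiv_mul, Derivation.leibniz_pow, hP0z, hQ0z]
  rw [hD, pd_iter_mul_left 1 m _ _ hq1,
    pd_iter_one_var 1 _ _ hP1 hQ1 β (γ - ℓ) m, mul_right_comm]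
  have hq0 : pderiv (0 : Fin 2) (C ((γ.choose ℓ : ℝ)) *
      (∑ j ∈ range (m + 1),
        C ((m.factorial : ℝ) / 2 ^ m * (β.choose (m - j) : ℝ) * ((γ - ℓ).choose j : ℝ)) *
          (C (1 / 2 : ℝ) * (1 + X 1)) ^ (β - (m - j)) *
          (C (1 / 2 : ℝ) * X 1) ^ (γ - ℓ - j))) = 0 := by
    rw [pderiv_C_mul, map_sum]
    rw [Finset.sum_eq_zero fun j _ => by
      simp [pderiv_mul, Derivation.leibniz_pow, hP1z, hQ1z, pderiv_C], mul_zero]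
  rw [pd_iter_mul_left 0 n _ _ hq0, pd_iter_one_var 0 _ _ hP0 hQ0 α ℓ n]
  ring
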